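/- Let S = {(x_i, y_i)}_{i=1}^n ⊆ ℝ × {−1,1} be a dataset with x_1 < x_2 < … < x_n, and suppose θ = (w, b, v) satisfies the KKT conditions of the maximum-margin problem for a width-k depth-2 ReLU network on S. Let 1 ≤ a < b ≤ n be such that x_b > x_a ≥ 0 and y_i = 1 for all a ≤ i ≤ b. Then in the interval [x_a, x_b] the network N_θ has at most two activation points at which the derivative of N_θ decreases. -/

import Mathlib

open Finset

/-- The ReLU activation function. -/
noncomputable def relu (z : ℝ) : ℝ := max 0 z

/-- A width-`k` depth-2 ReLU network with weights `w`, biases `b`, output weights `v`. -/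
noncomputable def NNet {k : ℕ} (w b v : Fin k → ℝ) (x : ℝ) : ℝ :=
  ∑ j : Fin k, v j * relu (w j * x + b j)

/-- `θ = (w, b, v)` satisfies the KKT conditions of the maximum-margin problem
for the dataset `(x i, y i)`. -/
def IsKKT {n k : ℕ} (x y : Fin n → ℝ) (w b v : Fin k → ℝ) : Prop :=
  (∀ i, 1 ≤ y i * NNet w b v (x i)) ∧
  ∃ (lam : Fin n → ℝ) (sg : Fin n → Fin k → ℝ),
    (∀ i, 0 ≤ lam i) ∧
    (∀ i j, sg i j ∈ Set.Icc (0 : ℝ) 1) ∧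
    (∀ i j, 0 < w j * x i + b j → sg i j = 1) ∧
    (∀ i j, w j * x i + b j < 0 → sg i j = 0) ∧
    (∀ i, y i * NNet w b v (x i) ≠ 1 → lam i = 0) ∧
    (∀ j, v j ≠ 0 → w j = ∑ i, lam i * y i * v j * sg i j * x i) ∧
    (∀ j, v j ≠ 0 → b j = ∑ i, lam i * y i * v j * sg i j)

/-- `f` is locally affine at `x`: it agrees with an affine function on a neighborhood of `x`. -/
def LocallyAffineAt (f : ℝ → ℝ) (x : ℝ) : Prop :=
  ∃ c d : ℝ, ∀ᶠ z in nhds x, f z = c * z + d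

/-- `x` is an activation point of the network `(w, b, v)`. -/
def IsActivationPoint {k : ℕ} (w b v : Fin k → ℝ) (x : ℝ) : Prop :=
  ∃ j : Fin k, v j ≠ 0 ∧ w j ≠ 0 ∧ w j * x + b j = 0

/-- The derivative of `f` decreases at `x`: for all sufficiently small `ε > 0`,
the derivative at `x + ε` is smaller than the derivative at `x - ε`. -/
def DerivDecreasesAt (f : ℝ → ℝ) (x : ℝ) : Prop :=
  ∃ ε₀ > (0 : ℝ), ∀ ε : ℝ, 0 < ε → ε < ε₀ → deriv f (x + ε) < deriv f (x - ε)

/-- The derivative of `f` increases at `x`: for all sufficiently small `ε > 0`,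
the derivative at `x - ε` is smaller than the derivative at `x + ε`. -/
def DerivIncreasesAt (f : ℝ → ℝ) (x : ℝ) : Prop :=
  ∃ ε₀ > (0 : ℝ), ∀ ε : ℝ, 0 < ε → ε < ε₀ → deriv f (x - ε) < deriv f (x + ε)

set_option linter.unusedVariables false

lemma deriv_NNet_eq {k : ℕ} (w b v : Fin k → ℝ) (z : ℝ)
    (h : ∀ j, w j ≠ 0 → w j * z + b j ≠ 0) :
    deriv (NNet w b v) z = ∑ j, if 0 < w j * z + b j then v j * w j else 0 := by
  have H : HasDerivAt (NNet w b v) (∑ j, if 0 < w j * z + b j then v j * w j else 0) z := by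
    apply HasDerivAt.fun_sum
    intro j _
    by_cases hwj : w j = 0
    · have : (fun x : ℝ => v j * relu (w j * x + b j)) = fun _ => v j * relu (b j) := by
        funext t; rw [hwj]; ring_nf
      rw [this]
      have : (if 0 < w j * z + b j then v j * w j else 0) = 0 := by
        rw [hwj]; simp
      rw [this]
      exact hasDerivAt_const z _
    · have hne := h j hwj
      have hcont : ContinuousAt (fun x : ℝ => w j * x + b j) z := by fun_prop
      rcases lt_or_gt_of_ne hne with hneg | hpos
      · have hev : ∀ᶠ t in nhds z, v j * relu (w j * t + b j) = v j * 0 := by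
          have : ∀ᶠ t in nhds z, w j * t + b j < 0 := hcont.eventually_lt continuousAt_const hneg
          filter_upwards [this] with t ht
          rw [relu, max_eq_left ht.le]
        have h0 : HasDerivAt (fun _ : ℝ => v j * (0:ℝ)) 0 z := hasDerivAt_const z _
        have := h0.congr_of_eventuallyEq hev
        simpa [if_neg (not_lt.mpr hneg.le)] using this
      · have hev : ∀ᶠ t in nhds z, v j * relu (w j * t + b j) = v j * (w j * t + b j) := by
          have : ∀ᶠ t in nhds z, 0 < w j * t + b j := continuousAt_const.eventually_lt hcont hpos
          filter_upwards [this] with t ht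
          rw [relu, max_eq_right ht.le]
        have h1 : HasDerivAt (fun t : ℝ => v j * (w j * t + b j)) (v j * w j) z := by
          have := (((hasDerivAt_id z).const_mul (w j)).add_const (b j)).const_mul (v j)
          simpa using this
        have := h1.congr_of_eventuallyEq hev
        simpa [if_pos hpos] using this
  exact H.deriv

lemma exists_neg_neuron {k : ℕ} (w b v : Fin k → ℝ) (t : ℝ)
    (hD : DerivDecreasesAt (NNet w b v) t) :
    ∃ j, v j < 0 ∧ w j ≠ 0 ∧ w j * t + b j = 0 := by
  by_contra hcon
  push_neg at hcon
  -- eventual sign stability for neurons not breaking at t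
  have hEv : ∀ᶠ z in nhds t, ∀ j, w j ≠ 0 → w j * t + b j ≠ 0 →
      ((0 < w j * z + b j ↔ 0 < w j * t + b j) ∧ w j * z + b j ≠ 0) := by
    rw [Filter.eventually_all]
    intro j
    by_cases hwj : w j ≠ 0
    · by_cases hbj : w j * t + b j ≠ 0
      · have hcont : ContinuousAt (fun x : ℝ => w j * x + b j) t := by fun_prop
        rcases lt_or_gt_of_ne hbj with hneg | hpos
        · have : ∀ᶠ z in nhds t, w j * z + b j < 0 :=
            hcont.eventually_lt continuousAt_const hneg
          filter_upwards [this] with z hz _ _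
          exact ⟨by constructor <;> intro h' <;> [exact absurd h' (by linarith); linarith], hz.ne⟩
        · have : ∀ᶠ z in nhds t, 0 < w j * z + b j :=
            continuousAt_const.eventually_lt hcont hpos
          filter_upwards [this] with z hz _ _
          exact ⟨⟨fun _ => hpos, fun _ => hz⟩, hz.ne'⟩
      · filter_upwards with z h1 h2; exact absurd h2 hbj
    · filter_upwards with z h1 h2; exact absurd h1 hwj
  rw [Metric.eventually_nhds_iff] at hEv
  obtain ⟨δ, hδ, hball⟩ := hEv
  obtain ⟨ε₀, hε₀, hdec⟩ := hD
  have hmin : 0 < min δ ε₀ := lt_min hδ hε₀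
  set ε := min δ ε₀ / 2 with hεdef
  have hε : 0 < ε := by positivity
  have hεδ : ε < δ := by have := min_le_left δ ε₀; simp only [hεdef]; linarith
  have hεε₀ : ε < ε₀ := by have := min_le_right δ ε₀; simp only [hεdef]; linarith
  have hp := hball (y := t + ε) (by rw [Real.dist_eq]; rw [show t + ε - t = ε by ring]; rw [abs_of_pos hε]; exact hεδ)
  have hm := hball (y := t - ε) (by rw [Real.dist_eq]; rw [show t - ε - t = -ε by ring]; rw [abs_neg, abs_of_pos hε]; exact hεδ)
  have hpre : ∀ (z : ℝ), (∀ j, w j ≠ 0 → w j * t + b j ≠ 0 →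
      (0 < w j * z + b j ↔ 0 < w j * t + b j) ∧ w j * z + b j ≠ 0) →
      (∀ j, w j ≠ 0 → w j * z + b j = w j * (z - t) + (w j * t + b j)) →
      True := fun _ _ _ => trivial
  -- precondition for the deriv formula at t ± ε
  have hside : ∀ (z : ℝ), z ≠ t → (∀ j, w j ≠ 0 → w j * t + b j ≠ 0 →
      (0 < w j * z + b j ↔ 0 < w j * t + b j) ∧ w j * z + b j ≠ 0) →
      ∀ j, w j ≠ 0 → w j * z + b j ≠ 0 := by
    intro z hz hcl j hwj
    by_cases hbj : w j * t + b j = 0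
    · have : w j * z + b j = w j * (z - t) := by linarith [hbj]
      rw [this]
      exact mul_ne_zero hwj (sub_ne_zero.mpr hz)
    · exact (hcl j hwj hbj).2
  have hdp := deriv_NNet_eq w b v (t + ε) (hside _ (by linarith) hp)
  have hdm := deriv_NNet_eq w b v (t - ε) (hside _ (by linarith) hm)
  have hlt := hdec ε hε hεε₀
  rw [hdp, hdm, ← sub_neg, ← Finset.sum_sub_distrib] at hlt
  have hge : (0:ℝ) ≤ ∑ j, ((if 0 < w j * (t + ε) + b j then v j * w j else 0) -
      (if 0 < w j * (t - ε) + b j then v j * w j else 0)) := by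
    apply Finset.sum_nonneg
    intro j _
    by_cases hwj : w j = 0
    · simp [hwj]
    · by_cases hbj : w j * t + b j = 0
      · have hv : 0 ≤ v j := le_of_not_gt (fun hv => hcon j hv hwj hbj)
        have hpe : w j * (t + ε) + b j = w j * ε := by linarith [hbj]
        have hme : w j * (t - ε) + b j = -(w j * ε) := by linarith [hbj]
        rw [hpe, hme]
        rcases lt_or_gt_of_ne hwj with hneg | hpos
        · have h1 : ¬ (0 < w j * ε) := by nlinarith
          have h2 : 0 < -(w j * ε) := by nlinarith
          rw [if_neg h1, if_pos h2]
          nlinarith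
        · have h1 : 0 < w j * ε := by nlinarith
          have h2 : ¬ (0 < -(w j * ε)) := by nlinarith
          rw [if_pos h1, if_neg h2]
          nlinarith
      · have h1 := (hp j hwj hbj).1
        have h2 := (hm j hwj hbj).1
        have : (0 < w j * (t + ε) + b j) ↔ (0 < w j * (t - ε) + b j) := h1.trans h2.symm
        by_cases hc : 0 < w j * (t + ε) + b j
        · rw [if_pos hc, if_pos (this.mp hc)]; simp
        · rw [if_neg hc, if_neg (fun h => hc (this.mpr h))]; simp
  linarith

set_option maxHeartbeats 1000000 in
lemma core_right {n k : ℕ} (x y : Fin n → ℝ) (hx : StrictMono x)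
    (a c : Fin n) (ha : 0 ≤ x a)
    (hyac : ∀ i, a ≤ i → i ≤ c → y i = 1)
    (w b v : Fin k → ℝ) (lam : Fin n → ℝ) (sg : Fin n → Fin k → ℝ)
    (hlam : ∀ i, 0 ≤ lam i)
    (hsg01 : ∀ i j, sg i j ∈ Set.Icc (0 : ℝ) 1)
    (hsg1 : ∀ i j, 0 < w j * x i + b j → sg i j = 1)
    (hsg0 : ∀ i j, w j * x i + b j < 0 → sg i j = 0)
    (hKw : ∀ j, v j ≠ 0 → w j = ∑ i, lam i * y i * v j * sg i j * x i)
    (hKb : ∀ j, v j ≠ 0 → b j = ∑ i, lam i * y i * v j * sg i j)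
    (t t' : ℝ) (ht1 : x a ≤ t) (ht2 : t ≤ x c) (ht1' : x a ≤ t') (ht2' : t' ≤ x c)
    (htt : t < t')
    (j j' : Fin k) (hv : v j < 0) (hw : 0 < w j) (hbp : w j * t + b j = 0)
    (hv' : v j' < 0) (hw' : 0 < w j') (hbp' : w j' * t' + b j' = 0) : False := by
  set A := ∑ i, lam i * y i * sg i j * x i with hA_def
  set B := ∑ i, lam i * y i * sg i j with hB_def
  set A' := ∑ i, lam i * y i * sg i j' * x i with hA'_def
  set B' := ∑ i, lam i * y i * sg i j' with hB'_def
  have hwA : w j = v j * A := by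
    rw [hKw j hv.ne, hA_def, Finset.mul_sum]
    exact Finset.sum_congr rfl (fun i _ => by ring)
  have hbB : b j = v j * B := by
    rw [hKb j hv.ne, hB_def, Finset.mul_sum]
    exact Finset.sum_congr rfl (fun i _ => by ring)
  have hwA' : w j' = v j' * A' := by
    rw [hKw j' hv'.ne, hA'_def, Finset.mul_sum]
    exact Finset.sum_congr rfl (fun i _ => by ring)
  have hbB' : b j' = v j' * B' := by
    rw [hKb j' hv'.ne, hB'_def, Finset.mul_sum]
    exact Finset.sum_congr rfl (fun i _ => by ring)
  have hA : A < 0 := by nlinarith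
  have hA' : A' < 0 := by nlinarith
  have hAtB : A * t + B = 0 := by
    have h0 : v j * (A * t + B) = 0 := by
      rw [hwA, hbB] at hbp; linear_combination hbp
    rcases mul_eq_zero.mp h0 with h | h
    · exact absurd h hv.ne
    · exact h
  have hAtB' : A' * t' + B' = 0 := by
    have h0 : v j' * (A' * t' + B') = 0 := by
      rw [hwA', hbB'] at hbp'; linear_combination hbp'
    rcases mul_eq_zero.mp h0 with h | h
    · exact absurd h hv'.ne
    · exact h
  have hsgj0 : ∀ i, x i < t → sg i j = 0 := by
    intro i hi
    apply hsg0
    have : w j * x i + b j = w j * (x i - t) := by linarith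
    rw [this]; nlinarith
  have hsgj1 : ∀ i, t < x i → sg i j = 1 := by
    intro i hi
    apply hsg1
    have : w j * x i + b j = w j * (x i - t) := by linarith
    rw [this]; nlinarith
  have hsgj'0 : ∀ i, x i < t' → sg i j' = 0 := by
    intro i hi
    apply hsg0
    have : w j' * x i + b j' = w j' * (x i - t') := by linarith
    rw [this]; nlinarith
  have hsgj'1 : ∀ i, t' < x i → sg i j' = 1 := by
    intro i hi
    apply hsg1
    have : w j' * x i + b j' = w j' * (x i - t') := by linarith
    rw [this]; nlinarith
  have key : ∑ i, lam i * y i * (sg i j - sg i j') * (1 + t * x i) = A' * (t' - t) := by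
    have expand : ∀ i ∈ Finset.univ, lam i * y i * (sg i j - sg i j') * (1 + t * x i)
        = (lam i * y i * sg i j + t * (lam i * y i * sg i j * x i))
          - (lam i * y i * sg i j' + t * (lam i * y i * sg i j' * x i)) := fun i _ => by ring
    rw [Finset.sum_congr rfl expand, Finset.sum_sub_distrib, Finset.sum_add_distrib,
      Finset.sum_add_distrib, ← Finset.mul_sum, ← Finset.mul_sum, ← hA_def, ← hB_def,
      ← hA'_def, ← hB'_def]
    linear_combination hAtB - hAtB'
  have nonneg : ∀ i ∈ Finset.univ, (0:ℝ) ≤ lam i * y i * (sg i j - sg i j') * (1 + t * x i) := by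
    intro i _
    by_cases h1 : x i < t
    · rw [hsgj0 i h1, hsgj'0 i (h1.trans htt)]; simp
    · by_cases h2 : t' < x i
      · rw [hsgj1 i ((htt.trans h2)), hsgj'1 i h2]; simp
      · push_neg at h1 h2
        have hia : a ≤ i := hx.le_iff_le.mp (ht1.trans h1)
        have hic : i ≤ c := hx.le_iff_le.mp (h2.trans ht2')
        have hyi : y i = 1 := hyac i hia hic
        have ht0 : 0 ≤ t := ha.trans ht1
        have hxi0 : 0 ≤ x i := ht0.trans h1
        have hD : 0 ≤ sg i j - sg i j' := by
          by_cases h3 : x i < t'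
          · rw [hsgj'0 i h3]
            linarith [(hsg01 i j).1]
          · push_neg at h3
            have hxt' : x i = t' := le_antisymm h2 h3
            rw [hsgj1 i (by rw [hxt']; exact htt)]
            linarith [(hsg01 i j').2]
        have hE : (0:ℝ) ≤ 1 + t * x i := by nlinarith
        rw [hyi, mul_one]
        exact mul_nonneg (mul_nonneg (hlam i) hD) hE
  have hsum : (0:ℝ) ≤ A' * (t' - t) := key ▸ Finset.sum_nonneg nonneg
  nlinarith

set_option maxHeartbeats 1000000 in
lemma core_left {n k : ℕ} (x y : Fin n → ℝ) (hx : StrictMono x)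
    (a c : Fin n) (ha : 0 ≤ x a)
    (hyac : ∀ i, a ≤ i → i ≤ c → y i = 1)
    (w b v : Fin k → ℝ) (lam : Fin n → ℝ) (sg : Fin n → Fin k → ℝ)
    (hlam : ∀ i, 0 ≤ lam i)
    (hsg01 : ∀ i j, sg i j ∈ Set.Icc (0 : ℝ) 1)
    (hsg1 : ∀ i j, 0 < w j * x i + b j → sg i j = 1)
    (hsg0 : ∀ i j, w j * x i + b j < 0 → sg i j = 0)
    (hKw : ∀ j, v j ≠ 0 → w j = ∑ i, lam i * y i * v j * sg i j * x i)
    (hKb : ∀ j, v j ≠ 0 → b j = ∑ i, lam i * y i * v j * sg i j)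
    (t t' : ℝ) (ht1 : x a ≤ t) (ht2 : t ≤ x c) (ht1' : x a ≤ t') (ht2' : t' ≤ x c)
    (htt : t < t')
    (j j' : Fin k) (hv : v j < 0) (hw : w j < 0) (hbp : w j * t + b j = 0)
    (hv' : v j' < 0) (hw' : w j' < 0) (hbp' : w j' * t' + b j' = 0) : False := by
  set A := ∑ i, lam i * y i * sg i j * x i with hA_def
  set B := ∑ i, lam i * y i * sg i j with hB_def
  set A' := ∑ i, lam i * y i * sg i j' * x i with hA'_def
  set B' := ∑ i, lam i * y i * sg i j' with hB'_def
  have hwA : w j = v j * A := by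
    rw [hKw j hv.ne, hA_def, Finset.mul_sum]
    exact Finset.sum_congr rfl (fun i _ => by ring)
  have hbB : b j = v j * B := by
    rw [hKb j hv.ne, hB_def, Finset.mul_sum]
    exact Finset.sum_congr rfl (fun i _ => by ring)
  have hwA' : w j' = v j' * A' := by
    rw [hKw j' hv'.ne, hA'_def, Finset.mul_sum]
    exact Finset.sum_congr rfl (fun i _ => by ring)
  have hbB' : b j' = v j' * B' := by
    rw [hKb j' hv'.ne, hB'_def, Finset.mul_sum]
    exact Finset.sum_congr rfl (fun i _ => by ring)
  have hA : 0 < A := by nlinarith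
  have hA' : 0 < A' := by nlinarith
  have hAtB : A * t + B = 0 := by
    have h0 : v j * (A * t + B) = 0 := by
      rw [hwA, hbB] at hbp; linear_combination hbp
    rcases mul_eq_zero.mp h0 with h | h
    · exact absurd h hv.ne
    · exact h
  have hAtB' : A' * t' + B' = 0 := by
    have h0 : v j' * (A' * t' + B') = 0 := by
      rw [hwA', hbB'] at hbp'; linear_combination hbp'
    rcases mul_eq_zero.mp h0 with h | h
    · exact absurd h hv'.ne
    · exact h
  have hsgj1 : ∀ i, x i < t → sg i j = 1 := by
    intro i hi
    apply hsg1
    have : w j * x i + b j = w j * (x i - t) := by linarith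
    rw [this]; nlinarith
  have hsgj0 : ∀ i, t < x i → sg i j = 0 := by
    intro i hi
    apply hsg0
    have : w j * x i + b j = w j * (x i - t) := by linarith
    rw [this]; nlinarith
  have hsgj'1 : ∀ i, x i < t' → sg i j' = 1 := by
    intro i hi
    apply hsg1
    have : w j' * x i + b j' = w j' * (x i - t') := by linarith
    rw [this]; nlinarith
  have hsgj'0 : ∀ i, t' < x i → sg i j' = 0 := by
    intro i hi
    apply hsg0
    have : w j' * x i + b j' = w j' * (x i - t') := by linarith
    rw [this]; nlinarith
  have key : ∑ i, lam i * y i * (sg i j' - sg i j) * (1 + t' * x i) = A * (t - t') := by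
    have expand : ∀ i ∈ Finset.univ, lam i * y i * (sg i j' - sg i j) * (1 + t' * x i)
        = (lam i * y i * sg i j' + t' * (lam i * y i * sg i j' * x i))
          - (lam i * y i * sg i j + t' * (lam i * y i * sg i j * x i)) := fun i _ => by ring
    rw [Finset.sum_congr rfl expand, Finset.sum_sub_distrib, Finset.sum_add_distrib,
      Finset.sum_add_distrib, ← Finset.mul_sum, ← Finset.mul_sum, ← hA_def, ← hB_def,
      ← hA'_def, ← hB'_def]
    linear_combination hAtB' - hAtB
  have nonneg : ∀ i ∈ Finset.univ, (0:ℝ) ≤ lam i * y i * (sg i j' - sg i j) * (1 + t' * x i) := by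
    intro i _
    by_cases h1 : x i < t
    · rw [hsgj1 i h1, hsgj'1 i (h1.trans htt)]; simp
    · by_cases h2 : t' < x i
      · rw [hsgj0 i (htt.trans h2), hsgj'0 i h2]; simp
      · push_neg at h1 h2
        have hia : a ≤ i := hx.le_iff_le.mp (ht1.trans h1)
        have hic : i ≤ c := hx.le_iff_le.mp (h2.trans ht2')
        have hyi : y i = 1 := hyac i hia hic
        have ht0 : 0 ≤ t := ha.trans ht1
        have hxi0 : 0 ≤ x i := ht0.trans h1
        have ht'0 : 0 ≤ t' := ht0.trans htt.le
        have hD : 0 ≤ sg i j' - sg i j := by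
          by_cases h3 : t < x i
          · rw [hsgj0 i h3]
            linarith [(hsg01 i j').1]
          · push_neg at h3
            have hxt : x i = t := le_antisymm h3 h1
            rw [hsgj'1 i (by rw [hxt]; exact htt)]
            linarith [(hsg01 i j).2]
        have hE : (0:ℝ) ≤ 1 + t' * x i := by nlinarith
        rw [hyi, mul_one]
        exact mul_nonneg (mul_nonneg (hlam i) hD) hE
  have hsum : (0:ℝ) ≤ A * (t - t') := key ▸ Finset.sum_nonneg nonneg
  nlinarith

/-- If `a < c`, `0 ≤ x_a < x_c`, and `y_i = 1` for all `a ≤ i ≤ c`, then in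
`[x_a, x_c]` the network `N_θ` has at most two activation points at which its derivative
decreases. -/
theorem stmt2 {n k : ℕ} (x y : Fin n → ℝ)
    (hx : StrictMono x) (hy : ∀ i, y i = 1 ∨ y i = -1)
    (w b v : Fin k → ℝ) (hKKT : IsKKT x y w b v)
    (a c : Fin n) (hac : a < c) (ha : 0 ≤ x a) (hxac : x a < x c)
    (hyac : ∀ i, a ≤ i → i ≤ c → y i = 1) :
    {z ∈ Set.Icc (x a) (x c) |
      IsActivationPoint w b v z ∧ DerivDecreasesAt (NNet w b v) z}.encard ≤ 2 := by
  classical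
  obtain ⟨hmargin, lam, sg, hlam, hsg01, hsg1, hsg0, hcomp, hKw, hKb⟩ := hKKT
  set S := {z ∈ Set.Icc (x a) (x c) |
      IsActivationPoint w b v z ∧ DerivDecreasesAt (NNet w b v) z} with hS
  set PR : ℝ → Prop := fun z => z ∈ Set.Icc (x a) (x c) ∧
      ∃ j, v j < 0 ∧ 0 < w j ∧ w j * z + b j = 0 with hPR
  set PL : ℝ → Prop := fun z => z ∈ Set.Icc (x a) (x c) ∧
      ∃ j, v j < 0 ∧ w j < 0 ∧ w j * z + b j = 0 with hPL
  have uniqR : ∀ z z', PR z → PR z' → z = z' := by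
    intro z z' ⟨hz, j, hj1, hj2, hj3⟩ ⟨hz', j', hj1', hj2', hj3'⟩
    rcases lt_trichotomy z z' with h | h | h
    · exact absurd (core_right x y hx a c ha hyac w b v lam sg hlam hsg01 hsg1 hsg0 hKw hKb
        z z' hz.1 hz.2 hz'.1 hz'.2 h j j' hj1 hj2 hj3 hj1' hj2' hj3') not_false
    · exact h
    · exact absurd (core_right x y hx a c ha hyac w b v lam sg hlam hsg01 hsg1 hsg0 hKw hKb
        z' z hz'.1 hz'.2 hz.1 hz.2 h j' j hj1' hj2' hj3' hj1 hj2 hj3) not_false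
  have uniqL : ∀ z z', PL z → PL z' → z = z' := by
    intro z z' ⟨hz, j, hj1, hj2, hj3⟩ ⟨hz', j', hj1', hj2', hj3'⟩
    rcases lt_trichotomy z z' with h | h | h
    · exact absurd (core_left x y hx a c ha hyac w b v lam sg hlam hsg01 hsg1 hsg0 hKw hKb
        z z' hz.1 hz.2 hz'.1 hz'.2 h j j' hj1 hj2 hj3 hj1' hj2' hj3') not_false
    · exact h
    · exact absurd (core_left x y hx a c ha hyac w b v lam sg hlam hsg01 hsg1 hsg0 hKw hKb
        z' z hz'.1 hz'.2 hz.1 hz.2 h j' j hj1' hj2' hj3' hj1 hj2 hj3) not_false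
  set p : ℝ := if hex : ∃ z, PR z then hex.choose else 0 with hp
  set q : ℝ := if hex : ∃ z, PL z then hex.choose else 0 with hq
  have hsub : S ⊆ {p, q} := by
    intro z hz
    obtain ⟨hzIcc, _, hzD⟩ := hz
    obtain ⟨j, hvj, hwj, hbpj⟩ := exists_neg_neuron w b v z hzD
    rcases hwj.lt_or_gt with hneg | hpos
    · have hPLz : PL z := ⟨hzIcc, j, hvj, hneg, hbpj⟩
      have hex : ∃ z, PL z := ⟨z, hPLz⟩
      have : q = hex.choose := by rw [hq, dif_pos hex]
      have hzq : z = q := by rw [this]; exact uniqL z _ hPLz hex.choose_spec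
      exact Or.inr (by simpa using hzq)
    · have hPRz : PR z := ⟨hzIcc, j, hvj, hpos, hbpj⟩
      have hex : ∃ z, PR z := ⟨z, hPRz⟩
      have : p = hex.choose := by rw [hp, dif_pos hex]
      have hzp : z = p := by rw [this]; exact uniqR z _ hPRz hex.choose_spec
      exact Or.inl (by simpa using hzp)
  refine le_trans (Set.encard_mono hsub) ?_
  by_cases hpq : p = q
  · simp [hpq]
  · rw [Set.encard_pair hpq]
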